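/- arXiv:1204.4693 — 5 statements merged into one kernel-verified Lean document; each statement's English description precedes it below -/
import Mathlib

section
/- The matrix multiplication tensor M⟨2⟩ for 2×2 matrices has tensor rank at most 7 (Strassen's algorithm). -/
open TensorProduct BigOperators

noncomputable section

/-- Rank of an order-3 tensor. -/
def tRank (k : Type*) [Field k] {A B C : Type*} [AddCommGroup A] [Module k A]
    [AddCommGroup B] [Module k B] [AddCommGroup C] [Module k C]
    (T : A ⊗[k] (B ⊗[k] C)) : ℕ :=
  sInf {r | ∃ (a : Fin r → A) (b : Fin r → B) (c : Fin r → C),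
    T = ∑ i, a i ⊗ₜ[k] (b i ⊗ₜ[k] c i)}

/-- Flattening of `A ⊗ M` to a linear map `A* → M`. -/
def flatten (k : Type*) [Field k] {A M : Type*} [AddCommGroup A] [Module k A]
    [AddCommGroup M] [Module k M] : A ⊗[k] M →ₗ[k] Module.Dual k A →ₗ[k] M :=
  (dualTensorHom k (Module.Dual k A) M).comp
    (TensorProduct.map (Module.Dual.eval k A) LinearMap.id)

variable (k : Type*) [Field k] {A B C : Type*} [AddCommGroup A] [Module k A]
    [AddCommGroup B] [Module k B] [AddCommGroup C] [Module k C]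

def rankA (T : A ⊗[k] (B ⊗[k] C)) : ℕ :=
  Module.finrank k (LinearMap.range (flatten k T))

def rankB (T : A ⊗[k] (B ⊗[k] C)) : ℕ :=
  Module.finrank k (LinearMap.range (flatten k ((TensorProduct.leftComm k A B C) T)))

def rankC (T : A ⊗[k] (B ⊗[k] C)) : ℕ :=
  Module.finrank k (LinearMap.range (flatten k ((TensorProduct.leftComm k A C B)
    ((TensorProduct.congr (LinearEquiv.refl k A) (TensorProduct.comm k B C)) T))))

/-- The coordinate functional `X ↦ X i j` on `n × n` matrices. -/
def entryDual (n : ℕ) (i j : Fin n) : Module.Dual ℂ (Matrix (Fin n) (Fin n) ℂ) where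
  toFun X := X i j
  map_add' _ _ := rfl
  map_smul' _ _ := rfl

/-- The matrix multiplication tensor `M⟨n⟩ ∈ (ℂⁿˣⁿ)* ⊗ (ℂⁿˣⁿ)* ⊗ ℂⁿˣⁿ`, the tensor of the
bilinear map `(X, Y) ↦ X * Y`. -/
def MMT (n : ℕ) : Module.Dual ℂ (Matrix (Fin n) (Fin n) ℂ) ⊗[ℂ]
    (Module.Dual ℂ (Matrix (Fin n) (Fin n) ℂ) ⊗[ℂ] Matrix (Fin n) (Fin n) ℂ) :=
  ∑ i : Fin n, ∑ j : Fin n, ∑ l : Fin n,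
    entryDual n i j ⊗ₜ[ℂ] (entryDual n j l ⊗ₜ[ℂ] Matrix.single i l 1)

/-- Strassen: the `2×2` matrix multiplication tensor has rank at most `7`. -/
theorem MMT_two_rank_le_seven : tRank ℂ (MMT 2) ≤ 7 := by
  have h : MMT 2 = ∑ i : Fin 7,
      (![entryDual 2 0 0 + entryDual 2 1 1,
         entryDual 2 1 0 + entryDual 2 1 1,
         entryDual 2 0 0,
         entryDual 2 1 1,
         entryDual 2 0 0 + entryDual 2 0 1,
         entryDual 2 1 0 - entryDual 2 0 0,
         entryDual 2 0 1 - entryDual 2 1 1] i) ⊗ₜ[ℂ]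
      ((![entryDual 2 0 0 + entryDual 2 1 1,
          entryDual 2 0 0,
          entryDual 2 0 1 - entryDual 2 1 1,
          entryDual 2 1 0 - entryDual 2 0 0,
          entryDual 2 1 1,
          entryDual 2 0 0 + entryDual 2 0 1,
          entryDual 2 1 0 + entryDual 2 1 1] i) ⊗ₜ[ℂ]
       (![Matrix.single 0 0 1 + Matrix.single 1 1 1,
          Matrix.single 1 0 1 - Matrix.single 1 1 1,
          Matrix.single 0 1 1 + Matrix.single 1 1 1,
          Matrix.single 0 0 1 + Matrix.single 1 0 1,
          Matrix.single 0 1 1 - Matrix.single 0 0 1,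
          Matrix.single 1 1 1,
          Matrix.single 0 0 1] i)) := by
    simp only [MMT, Fin.sum_univ_two, Fin.sum_univ_succ, Fin.sum_univ_zero,
      Matrix.cons_val_zero, Matrix.cons_val_one, Matrix.head_cons, Fin.succ_zero_eq_one,
      Matrix.cons_val_succ,
      TensorProduct.add_tmul, TensorProduct.tmul_add, TensorProduct.sub_tmul,
      TensorProduct.tmul_sub]
    abel_nf
  rw [tRank]
  exact Nat.sInf_le ⟨_, _, _, h⟩
end
end

section
/- Strassen's equations give a lower bound: for T ∈ C^3 ⊗ B ⊗ C with B, C of dimension m, writing T = Σ_{i=1}^3 e_i ⊗ X_i with X_i m×m matrices and X_1 invertible, the border rank of T is at least m + (1/2) rank(X_1^{-1}X_2 X_1^{-1}X_3 − X_1^{-1}X_3 X_1^{-1}X_2). -/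
open TensorProduct BigOperators

noncomputable section

variable (k : Type*) [Field k] {A B C : Type*} [AddCommGroup A] [Module k A]
    [AddCommGroup B] [Module k B] [AddCommGroup C] [Module k C]

open Filter Topology

variable (m : ℕ)

abbrev V (m : ℕ) := Fin m → ℂ
abbrev T3mm (m : ℕ) := V 3 ⊗[ℂ] (V m ⊗[ℂ] V m)

/-- The standard monomial basis of `ℂ³ ⊗ ℂᵐ ⊗ ℂᵐ`. -/
def bb (m : ℕ) : Module.Basis (Fin 3 × Fin m × Fin m) ℂ (T3mm m) :=
  (Pi.basisFun ℂ (Fin 3)).tensorProduct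
    ((Pi.basisFun ℂ (Fin m)).tensorProduct (Pi.basisFun ℂ (Fin m)))

/-- Border rank: the least `r` such that `T` is a (coordinatewise) limit of tensors of rank
at most `r`. -/
def borderRank (T : T3mm m) : ℕ :=
  sInf {r | ∃ g : ℕ → T3mm m, (∀ l, tRank ℂ (g l) ≤ r) ∧
    ∀ p, Tendsto (fun l => (bb m).repr (g l) p) atTop (𝓝 ((bb m).repr T p))}

/-- The tensor in `ℂᵐ ⊗ ℂᵐ` associated to an `m×m` matrix. -/
def matToTensor (X : Matrix (Fin m) (Fin m) ℂ) : V m ⊗[ℂ] V m :=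
  ∑ j : Fin m, ∑ l : Fin m, X j l • (Pi.single j 1 ⊗ₜ[ℂ] Pi.single l 1)


section StrassenAux

open Matrix


variable {K : Type*} [Field K]

lemma myrank_neg {a b : ℕ} (A : Matrix (Fin a) (Fin b) K) : (-A).rank = A.rank := by
  have h : (-A) = (-1 : Matrix (Fin a) (Fin a) K) * A := by simp
  rw [h]
  exact Matrix.rank_mul_eq_right_of_isUnit_det _ _ (by simp [Matrix.det_neg, isUnit_iff_ne_zero])

lemma myrank_add_le {a b : ℕ} (A B : Matrix (Fin a) (Fin b) K) :
    (A + B).rank ≤ A.rank + B.rank := by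
  rw [Matrix.rank, Matrix.rank, Matrix.rank]
  have h : LinearMap.range (A + B).mulVecLin ≤
      LinearMap.range A.mulVecLin ⊔ LinearMap.range B.mulVecLin := by
    rintro x ⟨y, rfl⟩
    rw [Matrix.mulVecLin_add]
    exact Submodule.mem_sup.2 ⟨_, ⟨y, rfl⟩, _, ⟨y, rfl⟩, rfl⟩
  exact (Submodule.finrank_mono h).trans
    (Submodule.finrank_add_le_finrank_add_finrank _ _)

lemma myrank_sub_le {a b : ℕ} (A B : Matrix (Fin a) (Fin b) K) :
    (A - B).rank ≤ A.rank + B.rank := by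
  rw [sub_eq_add_neg]
  exact (myrank_add_le A (-B)).trans (by rw [myrank_neg])

lemma myrank_smul {a b : ℕ} (A : Matrix (Fin a) (Fin b) K) {c : K} (hc : c ≠ 0) :
    (c • A).rank = A.rank := by
  have h : c • A = (c • (1 : Matrix (Fin a) (Fin a) K)) * A := by
    rw [Matrix.smul_mul, Matrix.one_mul]
  rw [h]
  exact Matrix.rank_mul_eq_right_of_isUnit_det _ _ (by simp [isUnit_iff_ne_zero, hc])

/-- Certificate for rank lower bound. -/
lemma exists_certificate {a b k : ℕ} (A : Matrix (Fin a) (Fin b) K) (hk : k ≤ A.rank) :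
    ∃ (P : Matrix (Fin k) (Fin a) K) (Q : Matrix (Fin b) (Fin k) K), P * A * Q = 1 := by
  classical
  -- basis of range of mulVecLin
  set Rg := LinearMap.range A.mulVecLin with hRg
  have : Module.finrank K Rg = A.rank := rfl
  let bas := Module.finBasis K Rg
  -- independent family of k vectors in K^a
  let v : Fin k → (Fin a → K) := fun i => (bas (Fin.castLE (by rw [this]; exact hk) i) : Fin a → K)
  have hv : LinearIndependent K v := by
    have h1 : LinearIndependent K fun i : Fin k => bas (Fin.castLE (by rw [this]; exact hk) i) :=
      bas.linearIndependent.comp _ (Fin.castLE_injective _)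
    exact h1.map' Rg.subtype (Submodule.ker_subtype Rg)
  -- preimages
  have hpre : ∀ i, ∃ u : Fin b → K, A.mulVec u = v i := by
    intro i
    obtain ⟨u, hu⟩ := (bas (Fin.castLE (by rw [this]; exact hk) i)).2
    exact ⟨u, hu⟩
  choose u hu using hpre
  let Q : Matrix (Fin b) (Fin k) K := Matrix.of fun j i => u i j
  have hAQ : ∀ i, (A * Q)ᵀ i = v i := by
    intro i
    ext x
    simpa [Matrix.mul_apply, Matrix.mulVec, dotProduct, Q] using congr_fun (hu i) x
  have hAQind : LinearIndependent K fun i => (A * Q)ᵀ i := by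
    have : (fun i => (A * Q)ᵀ i) = v := funext hAQ
    rw [this]; exact hv
  have hinj : Function.Injective (A * Q).mulVec := Matrix.mulVec_injective_iff.2 hAQind
  obtain ⟨φ, hφ⟩ := (A * Q).mulVecLin.exists_leftInverse_of_injective
    (LinearMap.ker_eq_bot.2 hinj)
  refine ⟨LinearMap.toMatrix' φ, Q, ?_⟩
  have := congr_arg LinearMap.toMatrix' hφ
  rw [LinearMap.toMatrix'_comp, LinearMap.toMatrix'_id] at this
  rw [← Matrix.toLin'_apply', LinearMap.toMatrix'_toLin'] at this
  rw [Matrix.mul_assoc]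
  exact this

/-- Lower semicontinuity of matrix rank. -/
lemma rank_le_of_tendsto {a b s : ℕ} {ι : Type*} {φ : Filter ι} [φ.NeBot]
    {F : ι → Matrix (Fin a) (Fin b) ℂ} {M : Matrix (Fin a) (Fin b) ℂ}
    (hconv : Tendsto F φ (𝓝 M)) (hrk : ∀ᶠ x in φ, (F x).rank ≤ s) : M.rank ≤ s := by
  by_contra h
  push_neg at h
  obtain ⟨P, Q, hPQ⟩ := exists_certificate M (Nat.succ_le_of_lt h)
  have hcontf : Continuous fun Y : Matrix (Fin a) (Fin b) ℂ => (P * Y * Q).det :=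
    ((continuous_const.matrix_mul continuous_id).matrix_mul continuous_const).matrix_det
  have hdet : Tendsto (fun x => (P * F x * Q).det) φ (𝓝 ((P * M * Q).det)) :=
    (hcontf.tendsto M).comp hconv
  have hne : ∀ᶠ x in φ, (P * F x * Q).det ≠ 0 := by
    apply hdet.eventually_ne
    rw [hPQ]
    simp
  obtain ⟨x, hx1, hx2⟩ := (hne.and hrk).exists
  have h1 : (s + 1 : ℕ) ≤ (P * F x * Q).rank := by
    rw [Matrix.rank_of_isUnit _ (Matrix.isUnit_iff_isUnit_det _ |>.2 (isUnit_iff_ne_zero.2 hx1))]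
    simp
  have h2 : (P * F x * Q).rank ≤ (F x).rank :=
    (Matrix.rank_mul_le_left _ _).trans (Matrix.rank_mul_le_right _ _)
  omega

section core

variable {m n : ℕ} (B : Matrix (Fin m) (Fin n) ℂ) (C : Matrix (Fin n) (Fin m) ℂ)
  (u v w : Fin n → ℂ)

/-- Strassen's commutator bound, exact rank, nonzero diagonal, inverse form. -/
lemma core_inv (hu : ∀ i, u i ≠ 0) (hdet : IsUnit (B * diagonal u * C)) :
    (B * diagonal v * C * (B * diagonal u * C)⁻¹ * (B * diagonal w * C)
      - B * diagonal w * C * (B * diagonal u * C)⁻¹ * (B * diagonal v * C)).rank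
      + 2 * m ≤ 2 * n := by
  classical
  set X0 := B * diagonal u * C with hX0
  have hdet' : IsUnit X0.det := (Matrix.isUnit_iff_isUnit_det _).1 hdet
  set W := X0⁻¹ with hW
  have hXW : X0 * W = 1 := Matrix.mul_nonsing_inv _ hdet'
  set Q : Matrix (Fin n) (Fin n) ℂ := C * W * B * diagonal u with hQ
  have cancel : ∀ {k : ℕ} (Y : Matrix (Fin m) (Fin k) ℂ),
      B * (diagonal u * (C * (W * Y))) = Y := by
    intro k Y
    calc B * (diagonal u * (C * (W * Y))) = (B * diagonal u * C * W) * Y := by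
          simp only [Matrix.mul_assoc]
      _ = Y := by rw [← hX0, hXW, Matrix.one_mul]
  have hQQ : Q * Q = Q := by
    calc Q * Q = C * (W * (B * (diagonal u * (C * (W * (B * diagonal u)))))) := by
          rw [hQ]; simp only [Matrix.mul_assoc]
      _ = C * (W * (B * diagonal u)) := by rw [cancel]
      _ = Q := by rw [hQ]; simp only [Matrix.mul_assoc]
  have hBuQ : (B * diagonal u) * Q = B * diagonal u := by
    calc (B * diagonal u) * Q = B * (diagonal u * (C * (W * (B * diagonal u)))) := by
          rw [hQ]; simp only [Matrix.mul_assoc]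
      _ = B * diagonal u := cancel _
  have hrankQm : m ≤ Q.rank := by
    have h0 : X0.rank = m := by
      rw [Matrix.rank_of_isUnit _ hdet]; simp
    calc m = X0.rank := h0.symm
      _ ≤ (B * diagonal u).rank := by rw [hX0]; exact Matrix.rank_mul_le_left _ _
      _ = ((B * diagonal u) * Q).rank := by rw [hBuQ]
      _ ≤ Q.rank := Matrix.rank_mul_le_right _ _
  set N : Matrix (Fin n) (Fin n) ℂ := 1 - Q with hN
  have hQ1N : Q = 1 - N := by rw [hN, sub_sub_cancel]
  have hQN : Q * N = 0 := by rw [hN, Matrix.mul_sub, Matrix.mul_one, hQQ, sub_self]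
  have hrankQN : Q.rank + N.rank ≤ n := by
    simpa using Matrix.rank_add_rank_le_card_of_mul_eq_zero hQN
  set Du' : Matrix (Fin n) (Fin n) ℂ := diagonal (fun i => (u i)⁻¹) with hDu'
  have hdd : diagonal u * Du' = 1 := by
    rw [hDu', Matrix.diagonal_mul_diagonal,
      show (fun i => u i * (u i)⁻¹) = fun _ => (1 : ℂ) from
        funext fun i => mul_inv_cancel₀ (hu i), Matrix.diagonal_one]
  have hE : C * W * B = Q * Du' := by
    rw [hQ, Matrix.mul_assoc (C * W * B) (diagonal u) Du', hdd, Matrix.mul_one]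
  -- the two cross terms
  have key : ∀ v' w' : Fin n → ℂ,
      B * diagonal v' * C * W * (B * diagonal w' * C)
        = B * (diagonal v' * (Du' * (diagonal w' * C)))
          - (B * diagonal v') * (N * (Du' * (diagonal w' * C))) := by
    intro v' w'
    calc B * diagonal v' * C * W * (B * diagonal w' * C)
        = B * (diagonal v' * ((C * W * B) * (diagonal w' * C))) := by
          simp only [Matrix.mul_assoc]
      _ = B * (diagonal v' * (((1 - N) * Du') * (diagonal w' * C))) := by
          rw [hE, ← hQ1N]
      _ = _ := by
          simp only [Matrix.sub_mul, Matrix.mul_sub, Matrix.one_mul, Matrix.mul_assoc]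
  have hdiag : ∀ v' w' : Fin n → ℂ,
      B * (diagonal v' * (Du' * (diagonal w' * C)))
        = B * diagonal (fun i => v' i * (u i)⁻¹ * w' i) * C := by
    intro v' w'
    rw [hDu']
    simp only [← Matrix.mul_assoc, Matrix.diagonal_mul_diagonal]
    rw [show (fun i => v' i * ((u i)⁻¹ * w' i)) = fun i => v' i * (u i)⁻¹ * w' i from
      funext fun i => by ring]
  have main : B * diagonal v * C * W * (B * diagonal w * C)
      - B * diagonal w * C * W * (B * diagonal v * C)
      = (B * diagonal w) * (N * (Du' * (diagonal v * C)))
        - (B * diagonal v) * (N * (Du' * (diagonal w * C))) := by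
    rw [key v w, key w v, hdiag v w, hdiag w v,
      show (fun i => v i * (u i)⁻¹ * w i) = (fun i => w i * (u i)⁻¹ * v i) from
        funext fun i => by ring]
    abel
  have hterm : ∀ v' w' : Fin n → ℂ,
      ((B * diagonal w') * (N * (Du' * (diagonal v' * C)))).rank ≤ N.rank := by
    intro v' w'
    calc ((B * diagonal w') * (N * (Du' * (diagonal v' * C)))).rank
        ≤ (N * (Du' * (diagonal v' * C))).rank := Matrix.rank_mul_le_right _ _
      _ ≤ N.rank := Matrix.rank_mul_le_left _ _
  have hfinal : (B * diagonal v * C * W * (B * diagonal w * C)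
      - B * diagonal w * C * W * (B * diagonal v * C)).rank ≤ N.rank + N.rank := by
    rw [main]
    exact (myrank_sub_le _ _).trans (add_le_add (hterm v w) (hterm w v))
  have := hfinal
  omega

/-- adjugate form, still with nonzero diagonal. -/
lemma core_adj_aux (hu : ∀ i, u i ≠ 0) (hdet : IsUnit (B * diagonal u * C)) :
    (B * diagonal v * C * (B * diagonal u * C).adjugate * (B * diagonal w * C)
      - B * diagonal w * C * (B * diagonal u * C).adjugate * (B * diagonal v * C)).rank
      + 2 * m ≤ 2 * n := by
  have hdet' : IsUnit (B * diagonal u * C).det := (Matrix.isUnit_iff_isUnit_det _).1 hdet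
  have hadj : (B * diagonal u * C).adjugate = (B * diagonal u * C).det • (B * diagonal u * C)⁻¹ := by
    rw [Matrix.inv_def, smul_smul, Ring.mul_inverse_cancel _ hdet', one_smul]
  rw [hadj]
  simp only [Matrix.mul_smul, Matrix.smul_mul, ← smul_sub]
  rw [myrank_smul _ (by simpa [isUnit_iff_ne_zero] using hdet')]
  exact core_inv B C u v w hu hdet

/-- adjugate form, invertibility of `X0` only. -/
lemma core_adj (hdet : IsUnit (B * diagonal u * C)) :
    (B * diagonal v * C * (B * diagonal u * C).adjugate * (B * diagonal w * C)
      - B * diagonal w * C * (B * diagonal u * C).adjugate * (B * diagonal v * C)).rank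
      + 2 * m ≤ 2 * n := by
  have hdet' : IsUnit (B * diagonal u * C).det := (Matrix.isUnit_iff_isUnit_det _).1 hdet
  have hmn : m ≤ n := by
    have h1 : (B * diagonal u * C).rank = m := by
      rw [Matrix.rank_of_isUnit _ hdet]; simp
    have h2 : (B * diagonal u * C).rank ≤ n := by
      refine le_trans (Matrix.rank_mul_le_left _ _) ?_
      refine le_trans (Matrix.rank_mul_le_left _ _) ?_
      simpa using B.rank_le_card_width
    omega
  -- perturbed family
  set X0 : ℂ → Matrix (Fin m) (Fin m) ℂ :=
    fun ε => B * diagonal (fun i => u i + ε) * C with hX0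
  set F : ℂ → Matrix (Fin m) (Fin m) ℂ := fun ε =>
    B * diagonal v * C * (X0 ε).adjugate * (B * diagonal w * C)
      - B * diagonal w * C * (X0 ε).adjugate * (B * diagonal v * C) with hF
  have hcontX0 : Continuous X0 := by
    refine (continuous_const.matrix_mul ?_).matrix_mul continuous_const
    exact Continuous.matrix_diagonal (continuous_pi fun i => by continuity)
  have hcontF : Continuous F := by
    refine Continuous.sub ?_ ?_ <;>
      exact (continuous_const.matrix_mul hcontX0.matrix_adjugate).matrix_mul continuous_const
  have hX00 : X0 0 = B * diagonal u * C := by simp [hX0]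
  have hF0 : F 0 = B * diagonal v * C * (B * diagonal u * C).adjugate * (B * diagonal w * C)
      - B * diagonal w * C * (B * diagonal u * C).adjugate * (B * diagonal v * C) := by
    rw [hF]; simp only [hX00]
  have hTend : Tendsto F (𝓝[≠] (0 : ℂ)) (𝓝 (F 0)) :=
    (hcontF.tendsto 0).mono_left nhdsWithin_le_nhds
  have hdetTend : Tendsto (fun ε => (X0 ε).det) (𝓝[≠] (0 : ℂ)) (𝓝 ((B * diagonal u * C).det)) := by
    have := (hcontX0.matrix_det.tendsto 0).mono_left
      (nhdsWithin_le_nhds (s := {(0 : ℂ)}ᶜ))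
    simpa [hX00] using this
  have hev1 : ∀ᶠ ε in 𝓝[≠] (0 : ℂ), IsUnit (X0 ε).det := by
    filter_upwards [hdetTend.eventually_ne (by simpa [isUnit_iff_ne_zero] using hdet')]
      with ε hε using isUnit_iff_ne_zero.2 hε
  have hev2 : ∀ᶠ ε in 𝓝[≠] (0 : ℂ), ∀ i, u i + ε ≠ 0 := by
    rw [Filter.eventually_all]
    intro i
    by_cases hui : u i = 0
    · filter_upwards [self_mem_nhdsWithin] with ε hε
      simpa [hui] using hε
    · have hc : Continuous (fun ε : ℂ => u i + ε) := continuous_const.add continuous_id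
      have : Tendsto (fun ε : ℂ => u i + ε) (𝓝[≠] (0 : ℂ)) (𝓝 (u i)) := by
        simpa using (hc.tendsto 0).mono_left nhdsWithin_le_nhds
      exact this.eventually_ne hui
  have hev : ∀ᶠ ε in 𝓝[≠] (0 : ℂ), (F ε).rank ≤ 2 * n - 2 * m := by
    filter_upwards [hev1, hev2] with ε h1 h2
    have h3 := core_adj_aux B C (fun i => u i + ε) v w h2
      ((Matrix.isUnit_iff_isUnit_det _).2 h1)
    simp only [hF, hX0]
    omega
  have hlim : (F 0).rank ≤ 2 * n - 2 * m := by
    have h0 : Tendsto F (𝓝[≠] (0 : ℂ)) (𝓝 (F 0)) := hTend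
    exact rank_le_of_tendsto h0 hev
  rw [← hF0]
  omega

end core

section TensorAux

variable {m : ℕ}

open Matrix

/-- The `k`-th tslice of a tensor, as a matrix. -/
def tslice (T : T3mm m) (k : Fin 3) : Matrix (Fin m) (Fin m) ℂ :=
  Matrix.of fun i j => (bb m).repr T (k, i, j)

lemma repr_sum {ι : Type*} (s : Finset ι) (f : ι → T3mm m) :
    (bb m).repr (∑ i ∈ s, f i) = ∑ i ∈ s, (bb m).repr (f i) :=
  map_sum ((bb m).repr : T3mm m →ₗ[ℂ] (Fin 3 × Fin m × Fin m →₀ ℂ)) f s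

lemma repr_tmul (a : V 3) (b c : V m) (p : Fin 3 × Fin m × Fin m) :
    (bb m).repr (a ⊗ₜ[ℂ] (b ⊗ₜ[ℂ] c)) p = a p.1 * (b p.2.1 * c p.2.2) := by
  obtain ⟨k, i, j⟩ := p
  simp only [bb, Module.Basis.tensorProduct_repr_tmul_apply, Pi.basisFun_repr, smul_eq_mul]
  ring

lemma tslice_sum_decomp {n : ℕ} (a : Fin n → V 3) (b c : Fin n → V m) (k : Fin 3) :
    tslice (∑ i, a i ⊗ₜ[ℂ] (b i ⊗ₜ[ℂ] c i)) k
      = (Matrix.of fun x i => b i x) * Matrix.diagonal (fun i => a i k)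
          * (Matrix.of fun i y => c i y) := by
  ext x y
  have hL : tslice (∑ i, a i ⊗ₜ[ℂ] (b i ⊗ₜ[ℂ] c i)) k x y
      = ∑ i, a i k * (b i x * c i y) := by
    simp only [tslice, Matrix.of_apply, repr_sum, Finsupp.coe_finset_sum, Finset.sum_apply]
    exact Finset.sum_congr rfl fun i _ => repr_tmul _ _ _ _
  rw [hL, Matrix.mul_apply]
  simp only [Matrix.mul_diagonal, Matrix.of_apply]
  exact Finset.sum_congr rfl fun i _ => by ring

lemma tslice_T (X : Fin 3 → Matrix (Fin m) (Fin m) ℂ) (k : Fin 3) :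
    tslice (∑ i : Fin 3, Pi.single i 1 ⊗ₜ[ℂ] matToTensor m (X i)) k = X k := by
  ext x y
  simp only [tslice, Matrix.of_apply, matToTensor, TensorProduct.tmul_sum, tmul_smul,
    repr_sum, _root_.map_smul, Finsupp.coe_finset_sum, Finset.sum_apply, Finsupp.coe_smul,
    Pi.smul_apply, smul_eq_mul]
  have : ∀ (i : Fin 3) (j l : Fin m),
      (bb m).repr (Pi.single i (1:ℂ) ⊗ₜ[ℂ] (Pi.single j (1:ℂ) ⊗ₜ[ℂ] Pi.single l (1:ℂ)))
        (k, x, y) = (if i = k then (1:ℂ) else 0) * ((if j = x then (1:ℂ) else 0) *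
          (if l = y then (1:ℂ) else 0)) := by
    intro i j l
    rw [repr_tmul]
    simp [Pi.single_apply, eq_comm]
  simp only [this]
  simp [Finset.sum_ite_eq', Finset.mul_sum]

lemma exists_decomp (T : T3mm m) :
    ∃ (n : ℕ) (a : Fin n → V 3) (b c : Fin n → V m),
      T = ∑ i, a i ⊗ₜ[ℂ] (b i ⊗ₜ[ℂ] c i) := by
  classical
  set ι := Fin 3 × Fin m × Fin m
  let e : ι ≃ Fin (Fintype.card ι) := Fintype.equivFin ι
  refine ⟨Fintype.card ι,
    (fun i => ((bb m).repr T (e.symm i)) • (Pi.single (e.symm i).1 (1:ℂ) : V 3)),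
    fun i => Pi.single (e.symm i).2.1 (1:ℂ),
    fun i => Pi.single (e.symm i).2.2 (1:ℂ), ?_⟩
  have hbox : ∀ p : ι, (bb m) p
      = Pi.single p.1 (1:ℂ) ⊗ₜ[ℂ] (Pi.single p.2.1 (1:ℂ) ⊗ₜ[ℂ] Pi.single p.2.2 (1:ℂ)) := by
    intro p
    rw [bb, Module.Basis.tensorProduct_apply', Module.Basis.tensorProduct_apply']
    simp
  calc T = ∑ p : ι, (bb m).repr T p • (bb m) p := ((bb m).sum_repr T).symm
    _ = ∑ i : Fin (Fintype.card ι), (bb m).repr T (e.symm i) • (bb m) (e.symm i) := by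
        rw [← e.symm.sum_comp (fun p => (bb m).repr T p • (bb m) p)]
    _ = _ := by
        refine Finset.sum_congr rfl fun i _ => ?_
        rw [hbox (e.symm i), TensorProduct.smul_tmul']

lemma tRank_decomp (T : T3mm m) :
    ∃ (n : ℕ), n ≤ tRank ℂ T ∧ ∃ (a : Fin n → V 3) (b c : Fin n → V m),
      T = ∑ i, a i ⊗ₜ[ℂ] (b i ⊗ₜ[ℂ] c i) := by
  refine ⟨tRank ℂ T, le_rfl, ?_⟩
  have hne : {r | ∃ (a : Fin r → V 3) (b : Fin r → V m) (c : Fin r → V m),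
      T = ∑ i, a i ⊗ₜ[ℂ] (b i ⊗ₜ[ℂ] c i)}.Nonempty := by
    obtain ⟨n, a, b, c, h⟩ := exists_decomp T
    exact ⟨n, a, b, c, h⟩
  exact Nat.sInf_mem hne

end TensorAux

end StrassenAux

/-- Strassen's equations: for `T = Σᵢ eᵢ ⊗ Xᵢ ∈ ℂ³ ⊗ ℂᵐ ⊗ ℂᵐ` with `X₁` invertible,
the border rank of `T` is at least
`m + ½ rank(X₁⁻¹X₂X₁⁻¹X₃ − X₁⁻¹X₃X₁⁻¹X₂)`  (stated with both sides doubled). -/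
theorem strassen_equations (X : Fin 3 → Matrix (Fin m) (Fin m) ℂ) (hX : IsUnit (X 0)) :
    2 * m + Matrix.rank ((X 0)⁻¹ * X 1 * ((X 0)⁻¹ * X 2) - (X 0)⁻¹ * X 2 * ((X 0)⁻¹ * X 1))
      ≤ 2 * borderRank m (∑ i : Fin 3, Pi.single i 1 ⊗ₜ[ℂ] matToTensor m (X i)) := by
  classical
  set T : T3mm m := ∑ i : Fin 3, Pi.single i 1 ⊗ₜ[ℂ] matToTensor m (X i) with hT
  set r := borderRank m T with hr
  have hdT : IsUnit (X 0).det := (Matrix.isUnit_iff_isUnit_det _).1 hX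
  have hne : {s | ∃ g : ℕ → T3mm m, (∀ l, tRank ℂ (g l) ≤ s) ∧
      ∀ p, Filter.Tendsto (fun l => (bb m).repr (g l) p) Filter.atTop
        (𝓝 ((bb m).repr T p))}.Nonempty :=
    ⟨tRank ℂ T, fun _ => T, fun _ => le_rfl, fun _ => tendsto_const_nhds⟩
  have hmem := Nat.sInf_mem hne
  obtain ⟨g, hgr, hgconv⟩ := hmem
  have hgr' : ∀ l, tRank ℂ (g l) ≤ r := hgr
  -- convergence of slices
  have hsl : ∀ k : Fin 3, Filter.Tendsto (fun l => tslice (g l) k) Filter.atTop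
      (𝓝 (tslice T k)) := by
    intro k
    refine tendsto_pi_nhds.2 ?_
    intro i
    refine tendsto_pi_nhds.2 ?_
    intro j
    exact hgconv (k, i, j)
  have hsT : ∀ k, tslice T k = X k := fun k => tslice_T X k
  have hall : Filter.Tendsto (fun l (k : Fin 3) => tslice (g l) k) Filter.atTop
      (𝓝 (fun k => tslice T k)) := tendsto_pi_nhds.2 hsl
  set Kfun : (Fin 3 → Matrix (Fin m) (Fin m) ℂ) → Matrix (Fin m) (Fin m) ℂ :=
    fun Y => Y 1 * (Y 0).adjugate * Y 2 - Y 2 * (Y 0).adjugate * Y 1 with hKfun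
  have hKcont : Continuous Kfun := by
    refine Continuous.sub ?_ ?_ <;>
      exact ((continuous_apply _).matrix_mul
        (continuous_apply 0).matrix_adjugate).matrix_mul (continuous_apply _)
  have hKtend : Filter.Tendsto (fun l => Kfun (fun k => tslice (g l) k)) Filter.atTop
      (𝓝 (Kfun fun k => tslice T k)) := (hKcont.tendsto _).comp hall
  have hdtend : Filter.Tendsto (fun l => (tslice (g l) 0).det) Filter.atTop
      (𝓝 ((tslice T 0).det)) :=
    ((Continuous.matrix_det continuous_id).tendsto _).comp (hsl 0)
  have hev : ∀ᶠ l in Filter.atTop, (tslice (g l) 0).det ≠ 0 := by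
    apply hdtend.eventually_ne
    rw [hsT 0]
    simpa [isUnit_iff_ne_zero] using hdT
  have hev2 : ∀ᶠ l in (Filter.atTop : Filter ℕ),
      (Kfun (fun k => tslice (g l) k)).rank ≤ 2 * r - 2 * m ∧ m ≤ r := by
    filter_upwards [hev] with l hl
    obtain ⟨n, hnle, a, b, c, hdec⟩ := tRank_decomp (g l)
    set Bm : Matrix (Fin m) (Fin n) ℂ := Matrix.of fun x i => b i x with hBm
    set Cm : Matrix (Fin n) (Fin m) ℂ := Matrix.of fun i y => c i y with hCm
    have hslk : ∀ k, tslice (g l) k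
        = Bm * Matrix.diagonal (fun i => a i k) * Cm := by
      intro k
      rw [hdec]
      exact tslice_sum_decomp a b c k
    have hunit : IsUnit (Bm * Matrix.diagonal (fun i => a i 0) * Cm) := by
      rw [← hslk 0]
      exact (Matrix.isUnit_iff_isUnit_det _).2 (isUnit_iff_ne_zero.2 hl)
    have hcore := core_adj Bm Cm (fun i => a i 0) (fun i => a i 1) (fun i => a i 2) hunit
    have hKeq : Kfun (fun k => tslice (g l) k)
        = Bm * Matrix.diagonal (fun i => a i 1) * Cm
            * (Bm * Matrix.diagonal (fun i => a i 0) * Cm).adjugate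
            * (Bm * Matrix.diagonal (fun i => a i 2) * Cm)
          - Bm * Matrix.diagonal (fun i => a i 2) * Cm
            * (Bm * Matrix.diagonal (fun i => a i 0) * Cm).adjugate
            * (Bm * Matrix.diagonal (fun i => a i 1) * Cm) := by
      rw [hKfun]
      simp only [hslk]
    rw [hKeq]
    have hlr := hgr' l
    omega
  have hKrank : (Kfun fun k => tslice T k).rank ≤ 2 * r - 2 * m :=
    rank_le_of_tendsto hKtend (hev2.mono fun l h => h.1)
  obtain ⟨l0, hl0⟩ := hev2.exists
  have hmr : m ≤ r := hl0.2
  have hKT : Kfun (fun k => tslice T k)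
      = X 1 * (X 0).adjugate * X 2 - X 2 * (X 0).adjugate * X 1 := by
    rw [hKfun]
    simp only [hsT]
  set S := (X 0)⁻¹ * X 1 * ((X 0)⁻¹ * X 2) - (X 0)⁻¹ * X 2 * ((X 0)⁻¹ * X 1) with hS
  have hMS : X 1 * (X 0).adjugate * X 2 - X 2 * (X 0).adjugate * X 1
      = (X 0).det • ((X 0) * S) := by
    have hadj : (X 0).adjugate = (X 0).det • (X 0)⁻¹ := by
      rw [Matrix.inv_def, smul_smul, Ring.mul_inverse_cancel _ hdT, one_smul]
    rw [hadj]
    simp only [Matrix.mul_smul, Matrix.smul_mul, ← smul_sub]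
    refine congrArg (fun M => (X 0).det • M) ?_
    rw [hS]
    simp only [Matrix.mul_sub, ← Matrix.mul_assoc, Matrix.mul_nonsing_inv _ hdT,
      Matrix.one_mul]
  have hrankS : S.rank = (Kfun fun k => tslice T k).rank := by
    rw [hKT, hMS, myrank_smul _ (by simpa [isUnit_iff_ne_zero] using hdT),
      Matrix.rank_mul_eq_right_of_isUnit_det _ _ hdT]
  have : S.rank ≤ 2 * r - 2 * m := by rw [hrankS]; exact hKrank
  omega
end
end

section
/- The polynomial x^{d-1} y has symmetric rank exactly d over C for d ≥ 2. -/
open BigOperators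

noncomputable section

/-- Symmetric rank: the minimal `r` such that `P` is a linear combination of `r` `d`-th powers
of linear forms. -/
def symRank (n d : ℕ) (P : MvPolynomial (Fin n) ℂ) : ℕ :=
  sInf {r | ∃ (c : Fin r → ℂ) (ℓ : Fin r → Fin n → ℂ),
    P = ∑ i, c i • (∑ j, MvPolynomial.C (ℓ i j) * MvPolynomial.X j) ^ d}

namespace SymRankAux

open MvPolynomial

abbrev Rp := MvPolynomial (Fin 2) ℂ

def Lf (a b : ℂ) : Rp := C a * X 0 + C b * X 1

lemma Lf_one_zero : Lf 1 0 = X 0 := by simp [Lf]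

def opD (a b : ℂ) : Rp →ₗ[ℂ] Rp :=
  b • (pderiv 0).toLinearMap - a • (pderiv 1).toLinearMap

lemma pderiv0_Lf (a b : ℂ) : pderiv (0 : Fin 2) (Lf a b) = C a := by
  simp [Lf]

lemma pderiv1_Lf (a b : ℂ) : pderiv (1 : Fin 2) (Lf a b) = C b := by
  simp [Lf]

lemma opD_Lf_pow (a b a' b' : ℂ) (m : ℕ) :
    opD a' b' (Lf a b ^ m) = ((m : ℂ) * (b' * a - a' * b)) • Lf a b ^ (m - 1) := by
  simp only [opD, LinearMap.sub_apply, LinearMap.smul_apply, Derivation.coeFn_coe,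
    Derivation.leibniz_pow, pderiv0_Lf, pderiv1_Lf, smul_eq_C_mul, nsmul_eq_mul]
  simp only [smul_eq_mul, map_sub, map_mul, map_natCast]
  ring

def opList (l : List (ℂ × ℂ)) : Rp →ₗ[ℂ] Rp :=
  l.foldr (fun p f => (opD p.1 p.2) ∘ₗ f) LinearMap.id

lemma opList_cons (p : ℂ × ℂ) (l : List (ℂ × ℂ)) (x : Rp) :
    opList (p :: l) x = opD p.1 p.2 (opList l x) := rfl

lemma opList_Lf_pow (l : List (ℂ × ℂ)) (a b : ℂ) (m : ℕ) :
    opList l (Lf a b ^ m) =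
      (((l.map (fun p => p.2 * a - p.1 * b)).prod * (m.descFactorial l.length : ℂ)))
        • Lf a b ^ (m - l.length) := by
  induction l with
  | nil => simp [opList]
  | cons p l ih =>
    rw [opList_cons, ih, map_smul, opD_Lf_pow, smul_smul]
    rw [List.length_cons, Nat.descFactorial_succ]
    have he : m - l.length - 1 = m - (l.length + 1) := by omega
    rw [he, List.map_cons, List.prod_cons]
    congr 1
    push_cast
    ring

lemma lower_bound (d r : ℕ) (hd : 2 ≤ d) (c : Fin r → ℂ) (ℓ : Fin r → Fin 2 → ℂ)
    (h : (X 0 ^ (d - 1) * X 1 : Rp) = ∑ i, c i • Lf (ℓ i 0) (ℓ i 1) ^ d) : d ≤ r := by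
  by_contra hr
  push_neg at hr
  classical
  set T : Finset (Fin r) := Finset.univ.filter (fun i => ℓ i 1 ≠ 0) with hT
  set l : List (ℂ × ℂ) := T.toList.map (fun i => (ℓ i 0, ℓ i 1)) with hl
  have hlen : l.length = T.card := by simp [hl]
  have ht : T.card ≤ d - 1 := by
    have h1 : T.card ≤ r := le_trans (Finset.card_filter_le _ _) (by simp)
    omega
  -- apply pderiv 1 then opList l to both sides
  have key := congrArg (fun q : Rp => opList l (pderiv 1 q)) h
  -- LHS
  have hL : opList l (pderiv 1 (X 0 ^ (d - 1) * X 1 : Rp)) =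
      ((∏ i ∈ T, ℓ i 1) * ((d - 1).descFactorial T.card : ℂ)) • X 0 ^ (d - 1 - T.card) := by
    have h1 : pderiv (1 : Fin 2) (X 0 ^ (d - 1) * X 1 : Rp) = X 0 ^ (d - 1) := by
      simp
    rw [h1, ← Lf_one_zero, opList_Lf_pow, hlen]
    congr 2
    rw [hl, List.map_map]
    rw [show ((fun p : ℂ × ℂ => p.2 * 1 - p.1 * 0) ∘ fun i => (ℓ i 0, ℓ i 1))
        = fun i => ℓ i 1 by funext i; simp]
    exact Finset.prod_map_toList T fun i => ℓ i 1
  -- RHS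
  have hR : opList l (pderiv 1 (∑ i, c i • Lf (ℓ i 0) (ℓ i 1) ^ d)) = 0 := by
    rw [map_sum, map_sum]
    refine Finset.sum_eq_zero fun i _ => ?_
    rw [Derivation.map_smul, map_smul]
    have hp : pderiv (1 : Fin 2) (Lf (ℓ i 0) (ℓ i 1) ^ d)
        = ((d : ℂ) * ℓ i 1) • Lf (ℓ i 0) (ℓ i 1) ^ (d - 1) := by
      simp only [Derivation.leibniz_pow, pderiv1_Lf, smul_eq_mul, nsmul_eq_mul,
        smul_eq_C_mul, map_mul, map_natCast]
      ring
    rw [hp, map_smul, opList_Lf_pow]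
    by_cases hi : i ∈ T
    · have : (l.map (fun p => p.2 * ℓ i 0 - p.1 * ℓ i 1)).prod = 0 := by
        rw [hl, List.map_map]
        rw [show ((fun p : ℂ × ℂ => p.2 * ℓ i 0 - p.1 * ℓ i 1) ∘ fun j => (ℓ j 0, ℓ j 1))
            = fun j => ℓ j 1 * ℓ i 0 - ℓ j 0 * ℓ i 1 by funext j; simp]
        rw [Finset.prod_map_toList]
        exact Finset.prod_eq_zero hi (by ring)
      rw [this, zero_mul, zero_smul, smul_zero, smul_zero]
    · have h0 : ℓ i 1 = 0 := by
        by_contra h0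
        exact hi (Finset.mem_filter.mpr ⟨Finset.mem_univ i, h0⟩)
      rw [h0, mul_zero, zero_smul, smul_zero]
  rw [hL, hR] at key
  -- contradiction
  have hne : ((∏ i ∈ T, ℓ i 1) * ((d - 1).descFactorial T.card : ℂ)) ≠ 0 := by
    apply mul_ne_zero
    · exact Finset.prod_ne_zero_iff.mpr fun i hi => (Finset.mem_filter.mp hi).2
    · exact_mod_cast Nat.cast_ne_zero.mpr (by
        have := Nat.descFactorial_eq_zero_iff_lt (n := d - 1) (k := T.card)
        omega)
  exact (smul_ne_zero hne (pow_ne_zero _ (X_ne_zero (R := ℂ) (0 : Fin 2)))) key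

lemma upper_bound (d : ℕ) (hd : 2 ≤ d) :
    ∃ (c : Fin d → ℂ) (ℓ : Fin d → Fin 2 → ℂ),
      (X 0 ^ (d - 1) * X 1 : Rp) = ∑ i, c i • Lf (ℓ i 0) (ℓ i 1) ^ d := by
  have hd0 : (d : ℂ) ≠ 0 := Nat.cast_ne_zero.mpr (by omega)
  set ω : ℂ := Complex.exp (2 * Real.pi * Complex.I / d) with hωdef
  have hω : IsPrimitiveRoot ω d := Complex.isPrimitiveRoot_exp d (by omega)
  refine ⟨fun i => ω ^ ((i : ℕ) * (d - 1)) / (d ^ 2 : ℂ), fun i => ![1, ω ^ (i : ℕ)], ?_⟩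
  simp only [Matrix.cons_val_zero, Matrix.cons_val_one, Matrix.head_cons]
  -- the geometric-sum computation
  have hgeo : ∀ k, k < d + 1 →
      (∑ i ∈ Finset.range d, ω ^ (i * (d - 1)) / (d ^ 2 : ℂ) * (ω ^ i) ^ (d - k))
        = if k = d - 1 then 1 / (d : ℂ) else 0 := by
    intro k hk
    have hcoll : ∀ i, ω ^ (i * (d - 1)) / (d ^ 2 : ℂ) * (ω ^ i) ^ (d - k)
        = (ω ^ (2 * d - 1 - k)) ^ i / (d ^ 2 : ℂ) := by
      intro i
      rw [div_mul_eq_mul_div, ← pow_mul, ← pow_mul, ← pow_add]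
      congr 2
      have : i * (d - 1) + i * (d - k) = i * ((d - 1) + (d - k)) := by ring
      rw [this, Nat.mul_comm]
      congr 1
      omega
    simp only [hcoll]
    rw [← Finset.sum_div]
    by_cases hke : k = d - 1
    · subst hke
      have h2 : 2 * d - 1 - (d - 1) = d := by omega
      rw [if_pos rfl, h2, hω.pow_eq_one]
      simp only [one_pow, Finset.sum_const, Finset.card_range, nsmul_eq_mul, mul_one]
      rw [sq, ← div_div, div_self hd0]
    · rw [if_neg hke]
      have hnd : ¬ (d ∣ (2 * d - 1 - k)) := by
        intro hdvd
        have hne : 2 * d - 1 - k ≠ 0 := by omega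
        have hlt : 2 * d - 1 - k < 2 * d := by omega
        have := Nat.eq_of_dvd_of_lt_two_mul hne hdvd hlt
        omega
      have hx : ω ^ (2 * d - 1 - k) ≠ 1 := fun h => hnd ((hω.pow_eq_one_iff_dvd _).mp h)
      rw [geom_sum_eq hx]
      rw [← pow_mul, mul_comm (2 * d - 1 - k) d, pow_mul, hω.pow_eq_one, one_pow, sub_self,
        zero_div, zero_div]
  -- expand each power via the binomial theorem
  have hLf : ∀ i : Fin d, Lf 1 (ω ^ (i : ℕ)) = X 0 + C (ω ^ (i : ℕ)) * X 1 := by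
    intro i; simp [Lf]
  have expand : ∀ i : Fin d, (Lf 1 (ω ^ (i : ℕ))) ^ d
      = ∑ k ∈ Finset.range (d + 1),
          C ((ω ^ (i : ℕ)) ^ (d - k)) * (X 0 ^ k * X 1 ^ (d - k) * (d.choose k : Rp)) := by
    intro i
    rw [hLf, add_pow]
    refine Finset.sum_congr rfl fun k hk => ?_
    rw [mul_pow, ← C_pow]
    ring
  have hrw : (∑ i : Fin d, (ω ^ ((i : ℕ) * (d - 1)) / (d ^ 2 : ℂ)) • Lf 1 (ω ^ (i : ℕ)) ^ d)
      = ∑ i : Fin d, ∑ k ∈ Finset.range (d + 1),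
          (ω ^ ((i : ℕ) * (d - 1)) / (d ^ 2 : ℂ)) •
            (C ((ω ^ (i : ℕ)) ^ (d - k)) * (X 0 ^ k * X 1 ^ (d - k) * (d.choose k : Rp))) :=
    Finset.sum_congr rfl fun i _ => by rw [expand i, Finset.smul_sum]
  rw [hrw, Finset.sum_comm]
  have hterm : ∀ k ∈ Finset.range (d + 1),
      (∑ i : Fin d, (ω ^ ((i : ℕ) * (d - 1)) / (d ^ 2 : ℂ)) •
          (C ((ω ^ (i : ℕ)) ^ (d - k)) * (X 0 ^ k * X 1 ^ (d - k) * (d.choose k : Rp))))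
      = C (if k = d - 1 then 1 / (d : ℂ) else 0) * (X 0 ^ k * X 1 ^ (d - k) * (d.choose k : Rp)) := by
    intro k hk
    rw [← hgeo k (Finset.mem_range.mp hk), ← Fin.sum_univ_eq_sum_range
      (fun i => ω ^ (i * (d - 1)) / (d ^ 2 : ℂ) * (ω ^ i) ^ (d - k)) d]
    rw [map_sum, Finset.sum_mul]
    refine Finset.sum_congr rfl fun i _ => ?_
    rw [smul_eq_C_mul, map_mul]
    ring
  rw [Finset.sum_congr rfl hterm]
  rw [Finset.sum_eq_single_of_mem (d - 1) (Finset.mem_range.mpr (by omega))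
    (fun k hk hne => by rw [if_neg hne, map_zero, zero_mul])]
  rw [if_pos rfl]
  have hc : d.choose (d - 1) = d := by
    have h1 : (1 : ℕ) ≤ d := by omega
    have := Nat.choose_symm h1 (n := d)
    rw [Nat.choose_one_right] at this
    exact this.symm ▸ rfl
  rw [hc]
  have h1 : d - (d - 1) = 1 := by omega
  rw [h1, pow_one]
  rw [← map_natCast (C : ℂ →+* Rp) d]
  rw [mul_comm (X 0 ^ (d - 1) * X 1) (C (d : ℂ)), ← mul_assoc, ← C_mul]
  rw [one_div, inv_mul_cancel₀ hd0, C_1, one_mul]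


end SymRankAux

open SymRankAux MvPolynomial in
/-- The binary form `x^{d-1} y` has symmetric rank exactly `d` over `ℂ`, for `d ≥ 2`. -/
theorem symRank_pow_mul (d : ℕ) (hd : 2 ≤ d) :
    symRank 2 d (MvPolynomial.X 0 ^ (d - 1) * MvPolynomial.X 1) = d := by
  have hsum : ∀ (r : ℕ) (ℓ : Fin r → Fin 2 → ℂ) (i : Fin r),
      (∑ j, C (ℓ i j) * X j : Rp) = Lf (ℓ i 0) (ℓ i 1) := by
    intro r ℓ i
    rw [Fin.sum_univ_two]
    rfl
  unfold symRank
  have hmem : d ∈ {r | ∃ (c : Fin r → ℂ) (ℓ : Fin r → Fin 2 → ℂ),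
      (X 0 ^ (d - 1) * X 1 : Rp) = ∑ i, c i • (∑ j, C (ℓ i j) * X j) ^ d} := by
    obtain ⟨c, ℓ, hc⟩ := upper_bound d hd
    refine ⟨c, ℓ, ?_⟩
    rw [hc]
    exact Finset.sum_congr rfl fun i _ => by rw [hsum d ℓ i]
  refine le_antisymm (Nat.sInf_le hmem) (le_csInf ⟨d, hmem⟩ fun r hr => ?_)
  obtain ⟨c, ℓ, h⟩ := hr
  refine lower_bound d r hd c ℓ ?_
  rw [h]
  exact Finset.sum_congr rfl fun i _ => by rw [hsum r ℓ i]
end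
end

section
/- The determinant of an n×n matrix of variables, as a polynomial of degree n, is an irreducible polynomial. -/
open MvPolynomial

namespace DetIrredAux

variable {σ R : Type*} [CommRing R] [IsDomain R]

/-- Transfer the `w`-grading on `MvPolynomial σ R` to the degree of a univariate polynomial:
`X v ↦ C (X v) * X ^ w v`. -/
noncomputable def T (w : σ → ℕ) : MvPolynomial σ R →+* Polynomial (MvPolynomial σ R) :=
  MvPolynomial.eval₂Hom (Polynomial.C.comp MvPolynomial.C)
    (fun v => Polynomial.C (MvPolynomial.X v) * Polynomial.X ^ w v)

lemma T_monomial (w : σ → ℕ) (m : σ →₀ ℕ) (c : R) :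
    T w (monomial m c) = Polynomial.C (monomial m c) * Polynomial.X ^ (Finsupp.weight w m) := by
  classical
  rw [T, eval₂Hom_monomial]
  simp only [RingHom.coe_comp, Function.comp_apply, mul_pow, ← Polynomial.C_pow,
    Finsupp.prod, Finset.prod_mul_distrib, ← map_prod, ← Polynomial.X_pow_mul, ← pow_mul]
  rw [Finset.prod_pow_eq_pow_sum]
  have hw : Finsupp.weight w m = ∑ i ∈ m.support, w i * m i := by
    rw [Finsupp.weight_apply, Finsupp.sum]
    exact Finset.sum_congr rfl fun i _ => by rw [smul_eq_mul, mul_comm]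
  have hm : (monomial m c : MvPolynomial σ R)
      = MvPolynomial.C c * ∏ x ∈ m.support, MvPolynomial.X x ^ m x := by
    rw [monomial_eq]; rfl
  rw [hw, hm, map_mul]
  ring

lemma coeff_T (w : σ → ℕ) (p : MvPolynomial σ R) (d : ℕ) :
    (T w p).coeff d = weightedHomogeneousComponent w d p := by
  classical
  conv_lhs => rw [p.as_sum]
  rw [map_sum, Polynomial.finset_sum_coeff, weightedHomogeneousComponent_apply,
    Finset.sum_filter]
  refine Finset.sum_congr rfl fun m _ => ?_
  rw [T_monomial, Polynomial.coeff_C_mul, Polynomial.coeff_X_pow]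
  by_cases h : Finsupp.weight w m = d
  · simp [h]
  · rw [if_neg (fun hh => h hh.symm), if_neg h, mul_zero]

lemma T_ne_zero (w : σ → ℕ) {p : MvPolynomial σ R} (hp : p ≠ 0) : T w p ≠ 0 := by
  intro h
  apply hp
  have key : (Polynomial.evalRingHom (1 : MvPolynomial σ R)).comp (T w) = RingHom.id _ := by
    apply MvPolynomial.ringHom_ext <;> intro v <;> simp [T]
  have h2 := congrArg (Polynomial.evalRingHom (1 : MvPolynomial σ R)) h
  rw [← RingHom.comp_apply, key, RingHom.id_apply, map_zero] at h2
  exact h2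

lemma T_of_WH {w : σ → ℕ} {p : MvPolynomial σ R} {d : ℕ} (h : IsWeightedHomogeneous w p d) :
    T w p = Polynomial.C p * Polynomial.X ^ d := by
  ext e
  rw [coeff_T, Polynomial.coeff_C_mul, Polynomial.coeff_X_pow]
  by_cases he : e = d
  · subst he; rw [if_pos rfl, mul_one, h.weightedHomogeneousComponent_same]
  · rw [if_neg he, mul_zero, h.weightedHomogeneousComponent_ne e he]

lemma WH_of_natDegree_zero {w : σ → ℕ} {p : MvPolynomial σ R}
    (h : (T w p).natDegree = 0) : IsWeightedHomogeneous w p 0 := by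
  intro m hm
  by_contra hd
  have hlt : (T w p).natDegree < Finsupp.weight w m := by omega
  have h0 := Polynomial.coeff_eq_zero_of_natDegree_lt hlt
  rw [coeff_T] at h0
  apply hm
  have h1 := congrArg (MvPolynomial.coeff m) h0
  classical
  rwa [coeff_weightedHomogeneousComponent, if_pos rfl, MvPolynomial.coeff_zero] at h1

/-- If `f * g` is weighted homogeneous of degree 1, one of the factors is weighted
homogeneous of degree 0. -/
lemma split {w : σ → ℕ} {f g : MvPolynomial σ R} (hf : f ≠ 0) (hg : g ≠ 0)
    (h : IsWeightedHomogeneous w (f * g) 1) :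
    IsWeightedHomogeneous w f 0 ∨ IsWeightedHomogeneous w g 0 := by
  have hfg : f * g ≠ 0 := mul_ne_zero hf hg
  have h1 : (T w (f * g)).natDegree = 1 := by
    rw [T_of_WH h, Polynomial.natDegree_C_mul_X_pow 1 _ hfg]
  rw [map_mul, Polynomial.natDegree_mul (T_ne_zero w hf) (T_ne_zero w hg)] at h1
  rcases Nat.add_eq_one_iff.mp h1 with ⟨ha, _⟩ | ⟨_, hb⟩
  · exact Or.inl (WH_of_natDegree_zero ha)
  · exact Or.inr (WH_of_natDegree_zero hb)

omit [IsDomain R] in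
lemma isWH_zero_degreeOf (w : σ → ℕ) {p : MvPolynomial σ R} (h : IsWeightedHomogeneous w p 0)
    {v : σ} (hv : w v ≠ 0) : degreeOf v p = 0 := by
  classical
  rw [← Nat.le_zero, degreeOf_le_iff]
  intro m hm
  have h0 : Finsupp.weight w m = 0 := h (MvPolynomial.mem_support_iff.mp hm)
  have := Finsupp.le_weight w hv m
  omega

omit [IsDomain R] in
lemma prod_X_single {ι : Type*} (s : Finset ι) (f : ι → σ) :
    ∏ i ∈ s, (X (f i) : MvPolynomial σ R) =
      monomial (∑ i ∈ s, Finsupp.single (f i) 1) 1 := by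
  classical
  induction s using Finset.cons_induction with
  | empty => simp
  | cons a s ha ih =>
      rw [Finset.prod_cons, Finset.sum_cons, ih, X, monomial_mul, one_mul]

variable {n : ℕ}

/-- The exponent of the monomial of the permutation `τ` in the generic determinant. -/
noncomputable def mE (τ : Equiv.Perm (Fin n)) : Fin n × Fin n →₀ ℕ :=
  ∑ i, Finsupp.single (τ i, i) 1

lemma mE_apply (τ : Equiv.Perm (Fin n)) (i j : Fin n) :
    mE τ (i, j) = if τ j = i then 1 else 0 := by
  classical
  rw [mE, Finsupp.finset_sum_apply, Finset.sum_eq_single j]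
  · rw [Finsupp.single_apply]
    by_cases h : τ j = i
    · rw [if_pos (by rw [h]), if_pos h]
    · rw [if_neg (by simp [h]), if_neg h]
  · intro k _ hk
    rw [Finsupp.single_apply, if_neg (by simp [hk])]
  · simp

lemma mE_injective : Function.Injective (mE (n := n)) := by
  intro ρ τ h
  apply Equiv.ext
  intro j
  have h2 := congrArg (fun m => m (ρ j, j)) h
  simp only [mE_apply] at h2
  by_contra hne
  rw [if_pos trivial, if_neg (fun hh => hne hh.symm)] at h2
  exact one_ne_zero h2

/-- The generic determinant polynomial. -/
noncomputable def D (n : ℕ) (R : Type*) [CommRing R] : MvPolynomial (Fin n × Fin n) R :=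
  Matrix.det (Matrix.of fun i j : Fin n => (X (i, j) : MvPolynomial (Fin n × Fin n) R))

lemma D_eq : D n R = ∑ τ : Equiv.Perm (Fin n), Equiv.Perm.sign τ • monomial (mE τ) (1 : R) := by
  rw [D, Matrix.det_apply]
  refine Finset.sum_congr rfl fun τ _ => ?_
  rw [mE]
  congr 1
  exact prod_X_single Finset.univ fun i => (τ i, i)

lemma coeff_D (τ : Equiv.Perm (Fin n)) :
    coeff (mE τ) (D n R) = Equiv.Perm.sign τ := by
  classical
  rw [D_eq, MvPolynomial.coeff_sum, Finset.sum_eq_single τ]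
  · rw [Units.smul_def, MvPolynomial.coeff_smul, coeff_monomial, if_pos rfl]
    simp
  · intro ρ _ hρ
    rw [Units.smul_def, MvPolynomial.coeff_smul, coeff_monomial,
      if_neg (fun h => hρ (mE_injective h)), smul_zero]
  · simp

lemma weight_mE (w : Fin n × Fin n → ℕ) (τ : Equiv.Perm (Fin n)) :
    Finsupp.weight w (mE τ) = ∑ i, w (τ i, i) := by
  rw [mE, map_sum]
  refine Finset.sum_congr rfl fun i _ => ?_
  rw [Finsupp.weight_apply, Finsupp.sum_single_index] <;> simp

lemma D_WH (w : Fin n × Fin n → ℕ) (hw : ∀ τ : Equiv.Perm (Fin n), ∑ i, w (τ i, i) = 1) :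
    IsWeightedHomogeneous w (D n R) 1 := by
  rw [← mem_weightedHomogeneousSubmodule, D_eq]
  refine Submodule.sum_mem _ fun τ _ => zsmul_mem ?_ _
  rw [mem_weightedHomogeneousSubmodule]
  exact isWeightedHomogeneous_monomial _ _ _ (by rw [weight_mE, hw])

lemma D_ne_zero [Nontrivial R] : D n R ≠ 0 := by
  intro h
  have h1 := coeff_D (R := R) (1 : Equiv.Perm (Fin n))
  rw [h] at h1
  simp at h1

/-- Every variable occurs in the generic determinant. -/
lemma degreeOf_D_ne_zero [Nontrivial R] (i j : Fin n) : degreeOf (i, j) (D n R) ≠ 0 := by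
  classical
  intro h0
  set τ : Equiv.Perm (Fin n) := Equiv.swap i j with hτ
  have hmem : mE τ ∈ (D n R).support := by
    rw [MvPolynomial.mem_support_iff, coeff_D]
    rcases Int.units_eq_one_or (Equiv.Perm.sign τ) with h | h <;> rw [h] <;> simp
  have hle : mE τ (i, j) ≤ degreeOf (i, j) (D n R) := by
    rw [degreeOf_eq_sup]
    exact Finset.le_sup (f := fun m => m (i, j)) hmem
  rw [mE_apply, if_pos (Equiv.swap_apply_right i j), h0] at hle
  omega

end DetIrredAux

open DetIrredAux

/-- A nonzero non-unit polynomial over a field contains some variable. -/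
lemma exists_var_of_not_isUnit {σ : Type*} {f : MvPolynomial σ ℂ} (hf : f ≠ 0)
    (hu : ¬IsUnit f) : ∃ v, MvPolynomial.degreeOf v f ≠ 0 := by
  classical
  by_contra h
  push_neg at h
  apply hu
  have hC : f = MvPolynomial.C (MvPolynomial.coeff 0 f) := by
    apply MvPolynomial.ext
    intro m
    by_cases hm : m = 0
    · subst hm; rw [MvPolynomial.coeff_C, if_pos rfl]
    · rw [MvPolynomial.coeff_C, if_neg (fun hh => hm hh.symm)]
      by_contra hc
      obtain ⟨v, hv⟩ : ∃ v, m v ≠ 0 := by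
        by_contra hall; push_neg at hall
        exact hm (Finsupp.ext fun v => hall v)
      have hmem : m ∈ f.support := MvPolynomial.mem_support_iff.mpr hc
      have : m v ≤ MvPolynomial.degreeOf v f := by
        rw [MvPolynomial.degreeOf_eq_sup]
        exact Finset.le_sup (f := fun m => m v) hmem
      rw [h v] at this
      omega
  have hc0 : MvPolynomial.coeff 0 f ≠ 0 := fun hc => hf (by rw [hC, hc, map_zero])
  rw [hC]
  exact (isUnit_iff_ne_zero.mpr hc0).map MvPolynomial.C

/-- The determinant of the generic `n × n` matrix of variables is an irreducible polynomial
(over `ℂ`, for `n ≥ 1`). -/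
theorem det_irreducible (n : ℕ) (hn : 1 ≤ n) :
    Irreducible (Matrix.det (Matrix.of fun i j : Fin n =>
      (MvPolynomial.X (i, j) : MvPolynomial (Fin n × Fin n) ℂ))) := by
  classical
  have hne : Nonempty (Fin n) := ⟨⟨0, hn⟩⟩
  show Irreducible (D n ℂ)
  constructor
  · -- not a unit
    intro hu
    have h0 : MvPolynomial.eval (fun _ => (0 : ℂ)) (D n ℂ) = 0 := by
      rw [D, RingHom.map_det]
      have hmat : (Matrix.of fun i j : Fin n =>
          (MvPolynomial.X (i, j) : MvPolynomial (Fin n × Fin n) ℂ)).map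
            (MvPolynomial.eval fun _ => (0 : ℂ)) = 0 := by
        ext i j
        simp [Matrix.map_apply]
      rw [RingHom.mapMatrix_apply, hmat, Matrix.det_zero]
    have := hu.map (MvPolynomial.eval (fun _ => (0 : ℂ)))
    rw [h0] at this
    exact not_isUnit_zero this
  · intro f g hfg
    by_contra hcon
    rcases not_or.mp hcon with ⟨huf, hug⟩
    have hD : D n ℂ ≠ 0 := D_ne_zero
    have hf0 : f ≠ 0 := fun h => hD (by rw [hfg, h, zero_mul])
    have hg0 : g ≠ 0 := fun h => hD (by rw [hfg, h, mul_zero])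
    obtain ⟨⟨i1, j1⟩, hv1⟩ := exists_var_of_not_isUnit hf0 huf
    obtain ⟨⟨i2, j2⟩, hv2⟩ := exists_var_of_not_isUnit hg0 hug
    -- row weight at row i2 : f is free of row i2
    set wr : Fin n × Fin n → ℕ := fun v => if v.1 = i2 then 1 else 0 with hwr
    have hDr : MvPolynomial.IsWeightedHomogeneous wr (f * g) 1 := by
      rw [← hfg]
      refine D_WH wr fun τ => ?_
      have : ∀ i : Fin n, wr (τ i, i) = if τ i = i2 then 1 else 0 := fun i => rfl
      simp only [this]
      rw [Equiv.sum_comp τ (fun k => if k = i2 then (1 : ℕ) else 0)]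
      simp
    have hfrow : MvPolynomial.IsWeightedHomogeneous wr f 0 := by
      rcases split hf0 hg0 hDr with h | h
      · exact h
      · exact absurd (isWH_zero_degreeOf wr h (v := (i2, j2)) (by simp [hwr])) hv2
    -- column weight at column j1 : g is free of column j1
    set wc : Fin n × Fin n → ℕ := fun v => if v.2 = j1 then 1 else 0 with hwc
    have hDc : MvPolynomial.IsWeightedHomogeneous wc (f * g) 1 := by
      rw [← hfg]
      refine D_WH wc fun τ => ?_
      have : ∀ i : Fin n, wc (τ i, i) = if i = j1 then 1 else 0 := fun i => rfl
      simp only [this]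
      simp
    have hgcol : MvPolynomial.IsWeightedHomogeneous wc g 0 := by
      rcases split hf0 hg0 hDc with h | h
      · exact absurd (isWH_zero_degreeOf wc h (v := (i1, j1)) (by simp [hwc])) hv1
      · exact h
    -- the variable (i2, j1) occurs in neither factor, contradiction
    have hdf : MvPolynomial.degreeOf (i2, j1) f = 0 :=
      isWH_zero_degreeOf wr hfrow (by simp [hwr])
    have hdg : MvPolynomial.degreeOf (i2, j1) g = 0 :=
      isWH_zero_degreeOf wc hgcol (by simp [hwc])
    have hle := MvPolynomial.degreeOf_mul_le (i2, j1) f g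
    rw [← hfg, hdf, hdg] at hle
    exact degreeOf_D_ne_zero (R := ℂ) i2 j1 (by omega)
end

section
/- Over C, the maximal rank of a tensor in C^2 ⊗ C^2 ⊗ C^2 is 3: every tensor in C^2 ⊗ C^2 ⊗ C^2 has rank at most 3. -/
open TensorProduct BigOperators

noncomputable section

variable (k : Type*) [Field k] {A B C : Type*} [AddCommGroup A] [Module k A]
    [AddCommGroup B] [Module k B] [AddCommGroup C] [Module k C]

namespace Aux2x2

/-- standard basis vectors of ℂ² -/
def e (i : Fin 2) : Fin 2 → ℂ := Pi.single i 1

lemma vec_eq_sum (v : Fin 2 → ℂ) : v = ∑ i, v i • e i := by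
  funext j
  simp [e, Pi.single_apply, Finset.sum_apply, Fin.sum_univ_two]

/-- tensor associated to a matrix -/
def mt (M : Fin 2 → Fin 2 → ℂ) : (Fin 2 → ℂ) ⊗[ℂ] (Fin 2 → ℂ) :=
  ∑ j, e j ⊗ₜ[ℂ] M j

lemma mt_rank_one (u v : Fin 2 → ℂ) : mt (fun j => u j • v) = u ⊗ₜ[ℂ] v := by
  rw [mt]
  conv_rhs => rw [vec_eq_sum u, sum_tmul]
  refine Finset.sum_congr rfl fun j _ => ?_
  simp [smul_tmul]

lemma tmul_eq_mt (b c : Fin 2 → ℂ) : b ⊗ₜ[ℂ] c = mt (fun j => b j • c) :=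
  (mt_rank_one b c).symm

/-- every element of ℂ²⊗ℂ² is `mt M` for some matrix `M`. -/
lemma exists_mt (s : (Fin 2 → ℂ) ⊗[ℂ] (Fin 2 → ℂ)) : ∃ M, s = mt M := by
  induction s using TensorProduct.induction_on with
  | zero => exact ⟨0, by simp [mt, tmul_zero]⟩
  | tmul b c => exact ⟨fun j => b j • c, tmul_eq_mt b c⟩
  | add x y hx hy =>
    obtain ⟨M, rfl⟩ := hx
    obtain ⟨N, rfl⟩ := hy
    exact ⟨M + N, by simp [mt, tmul_add, Finset.sum_add_distrib]⟩

/-- split off the first factor -/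
lemma exists_slices (T : (Fin 2 → ℂ) ⊗[ℂ] ((Fin 2 → ℂ) ⊗[ℂ] (Fin 2 → ℂ))) :
    ∃ s₀ s₁, T = e 0 ⊗ₜ[ℂ] s₀ + e 1 ⊗ₜ[ℂ] s₁ := by
  induction T using TensorProduct.induction_on with
  | zero => exact ⟨0, 0, by simp [tmul_zero]⟩
  | tmul a s =>
    refine ⟨a 0 • s, a 1 • s, ?_⟩
    conv_lhs => rw [vec_eq_sum a, sum_tmul]
    simp [Fin.sum_univ_two, smul_tmul, tmul_smul]
  | add x y hx hy =>
    obtain ⟨s₀, s₁, rfl⟩ := hx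
    obtain ⟨t₀, t₁, rfl⟩ := hy
    exact ⟨s₀ + t₀, s₁ + t₁, by rw [tmul_add, tmul_add]; abel⟩

def det2 (M : Fin 2 → Fin 2 → ℂ) : ℂ := M 0 0 * M 1 1 - M 0 1 * M 1 0

lemma mt_add (P Q : Fin 2 → Fin 2 → ℂ) : mt (P + Q) = mt P + mt Q := by
  simp [mt, tmul_add, Finset.sum_add_distrib]

lemma mt_smul (l : ℂ) (P : Fin 2 → Fin 2 → ℂ) : mt (l • P) = l • mt P := by
  simp [mt, tmul_smul, Finset.smul_sum]

lemma mt_two (M : Fin 2 → Fin 2 → ℂ) : mt M = e 0 ⊗ₜ[ℂ] M 0 + e 1 ⊗ₜ[ℂ] M 1 := by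
  simp [mt, Fin.sum_univ_two]

lemma quad_root (a b c : ℂ) (ha : a ≠ 0) : ∃ x : ℂ, a * x ^ 2 + b * x + c = 0 := by
  obtain ⟨z, hz⟩ := IsAlgClosed.exists_pow_nat_eq (k := ℂ) (discrim a b c) zero_lt_two
  obtain ⟨x, hx⟩ := exists_quadratic_eq_zero ha ⟨z, by rw [← hz, sq]⟩
  exact ⟨x, by linear_combination hx⟩

lemma singular_rank_one {M : Fin 2 → Fin 2 → ℂ} (h : det2 M = 0) :
    ∃ u v : Fin 2 → ℂ, M = fun j => u j • v := by
  rw [det2, sub_eq_zero] at h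
  by_cases h00 : M 0 0 = 0
  · rw [h00, zero_mul] at h
    rcases mul_eq_zero.mp h.symm with h01 | h10
    · refine ⟨![0, 1], M 1, ?_⟩
      funext j
      fin_cases j <;> funext k <;> fin_cases k <;>
        simp_all [Pi.smul_apply, smul_eq_mul]
    · refine ⟨fun j => M j 1, ![0, 1], ?_⟩
      funext j
      fin_cases j <;> funext k <;> fin_cases k <;>
        simp_all [Pi.smul_apply, smul_eq_mul]
  · refine ⟨fun j => M j 0, fun k => M 0 k / M 0 0, ?_⟩
    funext j
    fin_cases j <;> funext k <;> fin_cases k <;>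
      simp only [Fin.zero_eta, Fin.mk_one, Fin.isValue, Pi.smul_apply, smul_eq_mul] <;>
      field_simp <;> linear_combination h

end Aux2x2

/-- Every tensor in `ℂ² ⊗ ℂ² ⊗ ℂ²` has rank at most 3. -/
theorem maximal_rank_C2C2C2
    (T : (Fin 2 → ℂ) ⊗[ℂ] ((Fin 2 → ℂ) ⊗[ℂ] (Fin 2 → ℂ))) :
    tRank ℂ T ≤ 3 := by
  open Aux2x2 in
  obtain ⟨s₀, s₁, rfl⟩ := exists_slices T
  obtain ⟨M₀, rfl⟩ := exists_mt s₀
  obtain ⟨M₁, rfl⟩ := exists_mt s₁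
  apply Nat.sInf_le
  by_cases hdet : det2 M₁ = 0
  · obtain ⟨u, v, hM⟩ := singular_rank_one hdet
    refine ⟨![e 0, e 0, e 1], ![e 0, e 1, u], ![M₀ 0, M₀ 1, v], ?_⟩
    rw [Fin.sum_univ_three]
    simp only [Matrix.cons_val_zero, Matrix.cons_val_one, Matrix.head_cons,
      Matrix.cons_val_two, Matrix.tail_cons]
    rw [hM, mt_rank_one, mt_two, tmul_add]
  · obtain ⟨l, hl⟩ := quad_root (det2 M₁)
      (-(M₀ 0 0 * M₁ 1 1 + M₁ 0 0 * M₀ 1 1 - M₀ 0 1 * M₁ 1 0 - M₁ 0 1 * M₀ 1 0))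
      (det2 M₀) hdet
    have hdN : det2 (fun j k => M₀ j k - l * M₁ j k) = 0 := by
      simp only [det2] at hl ⊢
      linear_combination hl
    obtain ⟨u, v, hN⟩ := singular_rank_one hdN
    have hM0 : M₀ = (fun j => u j • v) + l • M₁ := by
      funext j k
      have h := congrFun (congrFun hN j) k
      simp only [Pi.add_apply, Pi.smul_apply, smul_eq_mul] at h ⊢
      linear_combination h
    have hmt0 : mt M₀ = u ⊗ₜ[ℂ] v + l • mt M₁ := by
      rw [hM0, mt_add, mt_smul, mt_rank_one]
    refine ⟨![e 0, l • e 0 + e 1, l • e 0 + e 1], ![u, e 0, e 1], ![v, M₁ 0, M₁ 1], ?_⟩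
    rw [Fin.sum_univ_three]
    simp only [Matrix.cons_val_zero, Matrix.cons_val_one, Matrix.head_cons,
      Matrix.cons_val_two, Matrix.tail_cons]
    rw [hmt0, mt_two, tmul_add, tmul_add, tmul_smul, tmul_add, smul_add,
      add_tmul, add_tmul, smul_tmul', smul_tmul']
    abel
end
end
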